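/- Let $U \subseteq \mathbb{R}^N$ be open, $(\eta^{ij})$ a symmetric real matrix, $\varepsilon_\alpha \in \mathbb{R}$, and $F^i, \psi^\alpha : U \to \mathbb{R}$ be $C^3$ functions. Define $b^{jk}_r = \eta^{js} \frac{\partial^2 F^k}{\partial u^s \partial u^r} - \eta^{js} \eta^{kp} \sum_{\alpha=1}^L \varepsilon_\alpha \frac{\partial^2 \psi^\alpha}{\partial u^s \partial u^r} \frac{\partial \psi^\alpha}{\partial u^p}$ and $(w^\alpha)^j_s = \eta^{jp} \frac{\partial^2 \psi^\alpha}{\partial u^p \partial u^s}$. Then for all $j,k,r,s$: $\frac{\partial b^{jk}_r}{\partial u^s} - \frac{\partial b^{jk}_s}{\partial u^r} = \sum_{\alpha=1}^L \varepsilon_\alpha \left( (w^\alpha)^j_s (w^\alpha)^k_r - (w^\alpha)^j_r (w^\alpha)^k_s \right)$. -/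

import Mathlib

/-- Partial derivative of `f` in the `k`-th coordinate direction at `x`. -/
noncomputable def pd {N : ℕ} (f : (Fin N → ℝ) → ℝ) (k : Fin N) (x : Fin N → ℝ) : ℝ :=
  fderiv ℝ f x (Pi.single k 1)

namespace Stmt5Aux

variable {N : ℕ} {U : Set (Fin N → ℝ)} {x : Fin N → ℝ}

lemma pd_congr {f g : (Fin N → ℝ) → ℝ} {k : Fin N} (h : f =ᶠ[nhds x] g) :
    pd f k x = pd g k x := by
  unfold pd; rw [h.fderiv_eq]

lemma contDiffOn_pd (hU : IsOpen U) {n : WithTop ℕ∞} {f : (Fin N → ℝ) → ℝ}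
    (hf : ContDiffOn ℝ (n + 1) f U) (k : Fin N) : ContDiffOn ℝ n (pd f k) U :=
  (hf.fderiv_of_isOpen hU le_rfl).clm_apply contDiffOn_const

lemma diffAt (hU : IsOpen U) (hx : x ∈ U) {n : WithTop ℕ∞} {f : (Fin N → ℝ) → ℝ}
    (hf : ContDiffOn ℝ (n + 1) f U) : DifferentiableAt ℝ f x :=
  ((hf.of_le le_add_self).contDiffAt (hU.mem_nhds hx)).differentiableAt one_ne_zero

lemma pd2_comm (hU : IsOpen U) (hx : x ∈ U) {f : (Fin N → ℝ) → ℝ}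
    (hf : ContDiffOn ℝ 2 f U) (a b : Fin N) :
    pd (pd f a) b x = pd (pd f b) a x := by
  have hcd : ContDiffAt ℝ 2 f x := hf.contDiffAt (hU.mem_nhds hx)
  have hsymm : IsSymmSndFDerivAt ℝ f x := hcd.isSymmSndFDerivAt (by norm_num [minSmoothness_of_isRCLikeNormedField])
  have hdf : DifferentiableAt ℝ (fderiv ℝ f) x := by
    have h1 : ContDiffAt ℝ 1 (fderiv ℝ f) x := hcd.fderiv_right (by norm_num)
    exact h1.differentiableAt one_ne_zero
  have key : ∀ v w : Fin N → ℝ,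
      fderiv ℝ (fun y => fderiv ℝ f y v) x w = fderiv ℝ (fderiv ℝ f) x w v := by
    intro v w
    have h1 : (fun y => fderiv ℝ f y v)
        = (ContinuousLinearMap.apply ℝ ℝ v) ∘ (fderiv ℝ f) := rfl
    rw [h1, fderiv_comp x ((ContinuousLinearMap.apply ℝ ℝ v).differentiableAt) hdf]
    simp
  show fderiv ℝ (fun y => fderiv ℝ f y (Pi.single a 1)) x (Pi.single b 1)
      = fderiv ℝ (fun y => fderiv ℝ f y (Pi.single b 1)) x (Pi.single a 1)
  rw [key, key]
  exact hsymm _ _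

lemma pd3_comm (hU : IsOpen U) (hx : x ∈ U) {f : (Fin N → ℝ) → ℝ}
    (hf : ContDiffOn ℝ 3 f U) (r t s : Fin N) :
    pd (pd (pd f r) t) s x = pd (pd (pd f s) t) r x := by
  have hf2 : ContDiffOn ℝ 2 f U := hf.of_le (by norm_num)
  have h2r : ContDiffOn ℝ 2 (pd f r) U := contDiffOn_pd (n := 2) hU (by exact_mod_cast hf) r
  have h2s : ContDiffOn ℝ 2 (pd f s) U := contDiffOn_pd (n := 2) hU (by exact_mod_cast hf) s
  calc pd (pd (pd f r) t) s x = pd (pd (pd f r) s) t x := pd2_comm hU hx h2r t s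
    _ = pd (pd (pd f s) r) t x := by
        apply pd_congr
        filter_upwards [hU.mem_nhds hx] with y hy
        exact pd2_comm hU hy hf2 r s
    _ = pd (pd (pd f s) t) r x := pd2_comm hU hx h2s r t

lemma pd_sub {f g : (Fin N → ℝ) → ℝ} {k : Fin N}
    (hf : DifferentiableAt ℝ f x) (hg : DifferentiableAt ℝ g x) :
    pd (fun y => f y - g y) k x = pd f k x - pd g k x := by
  unfold pd; rw [fderiv_fun_sub hf hg]; rfl

lemma pd_sum {ι : Type*} (t : Finset ι) (f : ι → (Fin N → ℝ) → ℝ) {k : Fin N}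
    (h : ∀ i ∈ t, DifferentiableAt ℝ (f i) x) :
    pd (fun y => ∑ i ∈ t, f i y) k x = ∑ i ∈ t, pd (f i) k x := by
  unfold pd; rw [fderiv_fun_sum h]; simp

lemma pd_const_mul {f : (Fin N → ℝ) → ℝ} {k : Fin N} (c : ℝ)
    (hf : DifferentiableAt ℝ f x) :
    pd (fun y => c * f y) k x = c * pd f k x := by
  unfold pd; rw [fderiv_const_mul hf]; rfl

lemma pd_mul {f g : (Fin N → ℝ) → ℝ} {k : Fin N}
    (hf : DifferentiableAt ℝ f x) (hg : DifferentiableAt ℝ g x) :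
    pd (fun y => f y * g y) k x = f x * pd g k x + pd f k x * g x := by
  unfold pd; rw [fderiv_fun_mul hf hg]; simp [mul_comm]

end Stmt5Aux

open Stmt5Aux in
theorem stmt5 (N L : ℕ) (U : Set (Fin N → ℝ)) (hU : IsOpen U)
    (η : Matrix (Fin N) (Fin N) ℝ) (hsym : η.IsSymm) (ε : Fin L → ℝ)
    (F : Fin N → (Fin N → ℝ) → ℝ) (ψ : Fin L → (Fin N → ℝ) → ℝ)
    (hF : ∀ i, ContDiffOn ℝ 3 (F i) U) (hψ : ∀ α, ContDiffOn ℝ 3 (ψ α) U) :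
    ∀ j k r s, ∀ x ∈ U,
      pd (fun y => (∑ t, η j t * pd (pd (F k) r) t y)
          - ∑ t, ∑ p, η j t * η k p * ∑ α, ε α * pd (pd (ψ α) r) t y * pd (ψ α) p y) s x
      - pd (fun y => (∑ t, η j t * pd (pd (F k) s) t y)
          - ∑ t, ∑ p, η j t * η k p * ∑ α, ε α * pd (pd (ψ α) s) t y * pd (ψ α) p y) r x
      = ∑ α, ε α *
          ((∑ p, η j p * pd (pd (ψ α) s) p x) * (∑ p, η k p * pd (pd (ψ α) r) p x)
          - (∑ p, η j p * pd (pd (ψ α) r) p x) * (∑ p, η k p * pd (pd (ψ α) s) p x)) := by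
  intro j k r s x hx
  have h3 : ∀ (f : (Fin N → ℝ) → ℝ), ContDiffOn ℝ 3 f U →
      ∀ a b : Fin N, (ContDiffOn ℝ 1 (pd (pd f a) b) U) ∧ (ContDiffOn ℝ 2 (pd f a) U) := by
    intro f hf a b
    have h2 : ContDiffOn ℝ 2 (pd f a) U := contDiffOn_pd (n := 2) hU (by exact_mod_cast hf) a
    exact ⟨contDiffOn_pd (n := 1) hU (by exact_mod_cast h2) b, h2⟩
  have dF : ∀ (a b : Fin N), ∀ y ∈ U, DifferentiableAt ℝ (pd (pd (F k) a) b) y :=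
    fun a b y hy => diffAt (n := 0) hU hy (by exact_mod_cast (h3 (F k) (hF k) a b).1)
  have dψ2 : ∀ (α : Fin L) (a b : Fin N), ∀ y ∈ U, DifferentiableAt ℝ (pd (pd (ψ α) a) b) y :=
    fun α a b y hy => diffAt (n := 0) hU hy (by exact_mod_cast (h3 (ψ α) (hψ α) a b).1)
  have dψ1 : ∀ (α : Fin L) (a : Fin N), ∀ y ∈ U, DifferentiableAt ℝ (pd (ψ α) a) y :=
    fun α a y hy => diffAt (n := 1) hU hy (by exact_mod_cast (h3 (ψ α) (hψ α) a a).2)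
  -- expansion of the derivative of the bracketed expression, for arbitrary indices
  have expand : ∀ a b : Fin N,
      pd (fun y => (∑ t, η j t * pd (pd (F k) a) t y)
          - ∑ t, ∑ p, η j t * η k p * ∑ α, ε α * pd (pd (ψ α) a) t y * pd (ψ α) p y) b x
      = (∑ t, η j t * pd (pd (pd (F k) a) t) b x)
        - ∑ t, ∑ p, η j t * η k p * ∑ α, ε α *
            (pd (pd (pd (ψ α) a) t) b x * pd (ψ α) p x
              + pd (pd (ψ α) a) t x * pd (pd (ψ α) p) b x) := by
    intro a b
    have dprod : ∀ (α : Fin L) (t p : Fin N),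
        DifferentiableAt ℝ (fun y => ε α * pd (pd (ψ α) a) t y * pd (ψ α) p y) x :=
      fun α t p => ((dψ2 α a t x hx).const_mul (ε α)).mul (dψ1 α p x hx)
    have d1 : DifferentiableAt ℝ (fun y => ∑ t, η j t * pd (pd (F k) a) t y) x :=
      DifferentiableAt.fun_sum fun t _ => (dF a t x hx).const_mul _
    have d2 : DifferentiableAt ℝ
        (fun y => ∑ t, ∑ p, η j t * η k p * ∑ α, ε α * pd (pd (ψ α) a) t y * pd (ψ α) p y) x := by
      refine DifferentiableAt.fun_sum fun t _ => DifferentiableAt.fun_sum fun p _ => ?_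
      exact (DifferentiableAt.fun_sum fun α _ => dprod α t p).const_mul _
    rw [pd_sub d1 d2]
    congr 1
    · rw [pd_sum Finset.univ (fun t y => η j t * pd (pd (F k) a) t y)
        (fun t _ => (dF a t x hx).const_mul _)]
      exact Finset.sum_congr rfl fun t _ => pd_const_mul _ (dF a t x hx)
    · rw [pd_sum Finset.univ
        (fun t y => ∑ p, η j t * η k p * ∑ α, ε α * pd (pd (ψ α) a) t y * pd (ψ α) p y)
        (fun t _ => DifferentiableAt.fun_sum fun p _ =>
          (DifferentiableAt.fun_sum fun α _ => dprod α t p).const_mul _)]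
      refine Finset.sum_congr rfl fun t _ => ?_
      rw [pd_sum Finset.univ
        (fun p y => η j t * η k p * ∑ α, ε α * pd (pd (ψ α) a) t y * pd (ψ α) p y)
        (fun p _ => (DifferentiableAt.fun_sum fun α _ => dprod α t p).const_mul _)]
      refine Finset.sum_congr rfl fun p _ => ?_
      rw [pd_const_mul _ (DifferentiableAt.fun_sum fun α _ => dprod α t p)]
      congr 1
      rw [pd_sum Finset.univ (fun α y => ε α * pd (pd (ψ α) a) t y * pd (ψ α) p y)
        (fun α _ => dprod α t p)]
      refine Finset.sum_congr rfl fun α _ => ?_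
      have hfe : (fun y => ε α * pd (pd (ψ α) a) t y * pd (ψ α) p y)
          = fun y => ε α * (pd (pd (ψ α) a) t y * pd (ψ α) p y) := by
        funext y; ring
      rw [hfe, pd_const_mul _ ((dψ2 α a t x hx).fun_mul (dψ1 α p x hx)),
        pd_mul (dψ2 α a t x hx) (dψ1 α p x hx)]
      ring
  rw [expand r s, expand s r]
  -- third-derivative symmetry
  have hF3 : ∀ t, pd (pd (pd (F k) r) t) s x = pd (pd (pd (F k) s) t) r x :=
    fun t => pd3_comm hU hx (hF k) r t s
  have hψ3 : ∀ α t, pd (pd (pd (ψ α) r) t) s x = pd (pd (pd (ψ α) s) t) r x :=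
    fun α t => pd3_comm hU hx (hψ α) r t s
  -- second-derivative symmetry
  have hψ2 : ∀ α a b, pd (pd (ψ α) a) b x = pd (pd (ψ α) b) a x :=
    fun α a b => pd2_comm hU hx ((hψ α).of_le (by norm_num)) a b
  have key : ∀ t p α,
      ε α * (pd (pd (pd (ψ α) r) t) s x * pd (ψ α) p x
          + pd (pd (ψ α) r) t x * pd (pd (ψ α) p) s x)
      - ε α * (pd (pd (pd (ψ α) s) t) r x * pd (ψ α) p x
          + pd (pd (ψ α) s) t x * pd (pd (ψ α) p) r x)
      = ε α * (pd (pd (ψ α) r) t x * pd (pd (ψ α) s) p x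
          - pd (pd (ψ α) s) t x * pd (pd (ψ α) r) p x) := by
    intro t p α
    rw [hψ3 α t, hψ2 α p s, hψ2 α p r]
    ring
  -- assemble
  have lhs_eq :
      ((∑ t, η j t * pd (pd (pd (F k) r) t) s x)
        - ∑ t, ∑ p, η j t * η k p * ∑ α, ε α *
            (pd (pd (pd (ψ α) r) t) s x * pd (ψ α) p x
              + pd (pd (ψ α) r) t x * pd (pd (ψ α) p) s x))
      - ((∑ t, η j t * pd (pd (pd (F k) s) t) r x)
        - ∑ t, ∑ p, η j t * η k p * ∑ α, ε α *
            (pd (pd (pd (ψ α) s) t) r x * pd (ψ α) p x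
              + pd (pd (ψ α) s) t x * pd (pd (ψ α) p) r x))
      = ∑ t, ∑ p, η j t * η k p * ∑ α, ε α *
          (pd (pd (ψ α) s) t x * pd (pd (ψ α) r) p x
            - pd (pd (ψ α) r) t x * pd (pd (ψ α) s) p x) := by
    have hFcancel : (∑ t, η j t * pd (pd (pd (F k) r) t) s x)
        = ∑ t, η j t * pd (pd (pd (F k) s) t) r x :=
      Finset.sum_congr rfl fun t _ => by rw [hF3 t]
    rw [hFcancel]
    rw [sub_sub_sub_comm, sub_self, zero_sub, ← Finset.sum_sub_distrib, neg_eq_iff_eq_neg,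
      ← Finset.sum_neg_distrib]
    refine Finset.sum_congr rfl fun t _ => ?_
    rw [← Finset.sum_sub_distrib, ← Finset.sum_neg_distrib]
    refine Finset.sum_congr rfl fun p _ => ?_
    rw [← mul_sub, ← Finset.sum_sub_distrib]
    have : ∑ α, (ε α * (pd (pd (pd (ψ α) r) t) s x * pd (ψ α) p x
          + pd (pd (ψ α) r) t x * pd (pd (ψ α) p) s x)
        - ε α * (pd (pd (pd (ψ α) s) t) r x * pd (ψ α) p x
          + pd (pd (ψ α) s) t x * pd (pd (ψ α) p) r x))
        = ∑ α, ε α * (pd (pd (ψ α) r) t x * pd (pd (ψ α) s) p x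
          - pd (pd (ψ α) s) t x * pd (pd (ψ α) r) p x) :=
      Finset.sum_congr rfl fun α _ => key t p α
    rw [this]
    have h2 : ∑ α, ε α * (pd (pd (ψ α) r) t x * pd (pd (ψ α) s) p x
          - pd (pd (ψ α) s) t x * pd (pd (ψ α) r) p x)
        = -∑ α, ε α * (pd (pd (ψ α) s) t x * pd (pd (ψ α) r) p x
          - pd (pd (ψ α) r) t x * pd (pd (ψ α) s) p x) := by
      rw [← Finset.sum_neg_distrib]
      exact Finset.sum_congr rfl fun α _ => by ring
    rw [h2]; ring
  rw [lhs_eq]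
  -- final finite-sum algebra
  have swap : ∑ t, ∑ p, η j t * η k p * ∑ α, ε α *
        (pd (pd (ψ α) s) t x * pd (pd (ψ α) r) p x
          - pd (pd (ψ α) r) t x * pd (pd (ψ α) s) p x)
      = ∑ α, ∑ t, ∑ p, η j t * η k p * (ε α *
        (pd (pd (ψ α) s) t x * pd (pd (ψ α) r) p x
          - pd (pd (ψ α) r) t x * pd (pd (ψ α) s) p x)) := by
    calc ∑ t, ∑ p, η j t * η k p * ∑ α, ε α *
          (pd (pd (ψ α) s) t x * pd (pd (ψ α) r) p x
            - pd (pd (ψ α) r) t x * pd (pd (ψ α) s) p x)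
        = ∑ t, ∑ p, ∑ α, η j t * η k p * (ε α *
          (pd (pd (ψ α) s) t x * pd (pd (ψ α) r) p x
            - pd (pd (ψ α) r) t x * pd (pd (ψ α) s) p x)) := by
          exact Finset.sum_congr rfl fun t _ => Finset.sum_congr rfl fun p _ => Finset.mul_sum ..
      _ = ∑ t, ∑ α, ∑ p, η j t * η k p * (ε α *
          (pd (pd (ψ α) s) t x * pd (pd (ψ α) r) p x
            - pd (pd (ψ α) r) t x * pd (pd (ψ α) s) p x)) :=
          Finset.sum_congr rfl fun t _ => Finset.sum_comm
      _ = ∑ α, ∑ t, ∑ p, η j t * η k p * (ε α *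
          (pd (pd (ψ α) s) t x * pd (pd (ψ α) r) p x
            - pd (pd (ψ α) r) t x * pd (pd (ψ α) s) p x)) := Finset.sum_comm
  rw [swap]
  refine Finset.sum_congr rfl fun α _ => ?_
  rw [Finset.sum_mul_sum, Finset.sum_mul_sum, ← Finset.sum_sub_distrib, Finset.mul_sum]
  refine Finset.sum_congr rfl fun t _ => ?_
  rw [← Finset.sum_sub_distrib, Finset.mul_sum]
  exact Finset.sum_congr rfl fun p _ => by ring
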